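/- arXiv:1304.7378 — 2 statements merged into one kernel-verified Lean document; each statement's English description precedes it below -/
import Mathlib

section
/- For every n ≥ 4, the group defined by the presentation with generators σ₁, σ, ρ and relations σ₁σⁱσ₁σ⁻ⁱ = σⁱσ₁σ⁻ⁱσ₁ for 2 ≤ i ≤ n/2, σⁿ = (σσ₁)ⁿ⁻¹, ρσⁱσ₁σ⁻ⁱ = σⁱσ₁σ⁻ⁱρ for i = 0, 2, 3, …, n−2, ρσσ₁σ⁻¹ρ = σσ₁σ⁻¹ρσσ₁σ⁻¹, σ₁² = 1, and ρ² = 1 is isomorphic to the Coxeter group of type Dₙ. -/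
/-!
STATEMENT 4: For every n ≥ 4, the group presented by generators σ₁, σ, ρ and
relations σ₁σⁱσ₁σ⁻ⁱ = σⁱσ₁σ⁻ⁱσ₁ (2 ≤ i ≤ n/2), σⁿ = (σσ₁)ⁿ⁻¹,
ρσⁱσ₁σ⁻ⁱ = σⁱσ₁σ⁻ⁱρ (i = 0, 2, 3, …, n−2), ρσσ₁σ⁻¹ρ = σσ₁σ⁻¹ρσσ₁σ⁻¹,
σ₁² = 1 and ρ² = 1 is isomorphic to the Coxeter group of type Dₙ.
-/

open FreeGroup

/-- Generators of the Coxeter group of type `Dₙ`: `w₁, …, w_{n-1}` (as `w i`,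
`i : Fin (n-1)`, `i` standing for `w_{i+1}`) and `u`. -/
inductive CoxDGen (n : ℕ) : Type
  | w (i : Fin (n - 1)) : CoxDGen n
  | u : CoxDGen n

open CoxDGen in
/-- The Coxeter relations of type `Dₙ`: every generator is an involution,
`(wᵢwᵢ₊₁)³ = 1` for `1 ≤ i ≤ n−2`, `(uw₂)³ = 1`, `uwᵢ = wᵢu` for `i ≠ 2`,
and `wᵢwⱼ = wⱼwᵢ` for `|i−j| ≥ 2`. -/
def coxeterDRels (n : ℕ) : Set (FreeGroup (CoxDGen n)) :=
  {r | (∃ i : Fin (n - 1), r = (of (w i)) ^ 2) ∨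
       r = (of u) ^ 2 ∨
       (∃ i j : Fin (n - 1), j.val = i.val + 1 ∧
          r = (of (w i) * of (w j)) ^ 3) ∨
       (∃ h : 1 < n - 1, r = (of u * of (w ⟨1, h⟩)) ^ 3) ∨
       (∃ i : Fin (n - 1), i.val ≠ 1 ∧
          r = of u * of (w i) * (of (w i) * of u)⁻¹) ∨
       (∃ i j : Fin (n - 1), (i.val + 1 < j.val ∨ j.val + 1 < i.val) ∧
          r = of (w i) * of (w j) * (of (w j) * of (w i))⁻¹)}

/-- The Coxeter group of type `Dₙ`. -/
def CoxeterGroupD (n : ℕ) : Type := PresentedGroup (coxeterDRels n)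

noncomputable instance (n : ℕ) : Group (CoxeterGroupD n) :=
  inferInstanceAs (Group (PresentedGroup (coxeterDRels n)))

/-- The three generators σ₁, σ and ρ. -/
inductive ThreeGenD : Type
  | s1 : ThreeGenD
  | s : ThreeGenD
  | r : ThreeGenD

open ThreeGenD in
/-- The relations of the three-generator presentation of the type `Dₙ` braid
group, together with `σ₁² = 1` and `ρ² = 1`. -/
def threeGenCoxDRels (n : ℕ) : Set (FreeGroup ThreeGenD) :=
  {x | (∃ i : ℕ, 2 ≤ i ∧ 2 * i ≤ n ∧
          x = (of s1 * (of s) ^ i * of s1 * ((of s) ^ i)⁻¹) *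
              ((of s) ^ i * of s1 * ((of s) ^ i)⁻¹ * of s1)⁻¹) ∨
       x = (of s) ^ n * (((of s) * of s1) ^ (n - 1))⁻¹ ∨
       (∃ i : ℕ, (i = 0 ∨ (2 ≤ i ∧ i ≤ n - 2)) ∧
          x = (of r * (of s) ^ i * of s1 * ((of s) ^ i)⁻¹) *
              ((of s) ^ i * of s1 * ((of s) ^ i)⁻¹ * of r)⁻¹) ∨
       x = (of r * (of s * of s1 * (of s)⁻¹) * of r) *
           ((of s * of s1 * (of s)⁻¹) * of r * (of s * of s1 * (of s)⁻¹))⁻¹ ∨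
       x = (of s1) ^ 2 ∨
       x = (of r) ^ 2}


section Chain
variable {M N : Type*} [Group M] [Group N]

def chainP (a : ℕ → M) (i : ℕ) : ℕ → M
  | 0 => 1
  | k+1 => chainP a i k * a (i + k)

@[simp] theorem chainP_zero (a : ℕ → M) (i : ℕ) : chainP a i 0 = 1 := rfl

theorem chainP_succ (a : ℕ → M) (i k : ℕ) :
    chainP a i (k+1) = chainP a i k * a (i + k) := rfl

@[simp] theorem chainP_one (a : ℕ → M) (i : ℕ) : chainP a i 1 = a i := by
  simp [chainP_succ]

theorem chainP_add (a : ℕ → M) (i k l : ℕ) :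
    chainP a i (k + l) = chainP a i k * chainP a (i + k) l := by
  induction l with
  | zero => simp
  | succ l ih => rw [← Nat.add_assoc, chainP_succ, ih, chainP_succ, mul_assoc, Nat.add_assoc]

theorem commute_chainP {x : M} (a : ℕ → M) (i k : ℕ)
    (h : ∀ t, t < k → Commute x (a (i + t))) : Commute x (chainP a i k) := by
  induction k with
  | zero => simp
  | succ k ih =>
    rw [chainP_succ]
    exact (ih fun t ht => h t (ht.trans (Nat.lt_succ_self k))).mul_right
      (h k (Nat.lt_succ_self k))

theorem map_chainP (f : M →* N) (a : ℕ → M) (i k : ℕ) :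
    f (chainP a i k) = chainP (fun t => f (a t)) i k := by
  induction k with
  | zero => simp
  | succ k ih => rw [chainP_succ, _root_.map_mul, ih, chainP_succ]

theorem chainP_congr {a b : ℕ → M} {i j : ℕ} (k : ℕ)
    (h : ∀ t, t < k → a (i + t) = b (j + t)) : chainP a i k = chainP b j k := by
  induction k with
  | zero => simp
  | succ k ih =>
    rw [chainP_succ, chainP_succ, ih (fun t ht => h t (ht.trans (Nat.lt_succ_self k))),
      h k (Nat.lt_succ_self k)]

theorem chainP_conj (a : ℕ → M) (g : M) (i k : ℕ) :
    chainP (fun t => g * a t * g⁻¹) i k = g * chainP a i k * g⁻¹ := by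
  induction k with
  | zero => simp
  | succ k ih => rw [chainP_succ, chainP_succ, ih]; group

end Chain

section CoxSide
variable {M : Type*} [Group M] (a : ℕ → M) (m : ℕ)
variable (Hsq : ∀ i, 1 ≤ i → i ≤ m → a i * a i = 1)
variable (Hbr : ∀ i, 1 ≤ i → i + 1 ≤ m → a i * a (i+1) * a i = a (i+1) * a i * a (i+1))
variable (Hcm : ∀ i j, 1 ≤ i → i + 2 ≤ j → j ≤ m → Commute (a i) (a j))

include Hsq in
theorem a_inv {i : ℕ} (h1 : 1 ≤ i) (h2 : i ≤ m) : (a i)⁻¹ = a i :=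
  inv_eq_of_mul_eq_one_right (Hsq i h1 h2)

include Hbr Hcm in
theorem lemA {i : ℕ} (h1 : 1 ≤ i) (h2 : i + 1 ≤ m) :
    chainP a 1 m * a i = a (i + 1) * chainP a 1 m := by
  have hsplit : chainP a 1 m =
      chainP a 1 (i-1) * (a i * a (i+1)) * chainP a (i+2) (m - (i+1)) := by
    have e1 : chainP a 1 m = chainP a 1 (i+1) * chainP a (1+(i+1)) (m - (i+1)) := by
      rw [← chainP_add]; congr 1; omega
    have e2 : chainP a 1 (i+1) = chainP a 1 (i-1) * chainP a (1+(i-1)) 2 := by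
      rw [← chainP_add]; congr 1; omega
    have e3 : chainP a (1+(i-1)) 2 = a i * a (i+1) := by
      rw [chainP_succ, chainP_one]
      congr 2 <;> omega
    rw [e1, e2, e3]; congr 2; omega
  have c1 : Commute (a i) (chainP a (i+2) (m - (i+1))) := by
    apply commute_chainP
    intro t ht
    exact Hcm i (i+2+t) h1 (by omega) (by omega)
  have c2 : Commute (a (i+1)) (chainP a 1 (i-1)) := by
    apply commute_chainP
    intro t ht
    exact (Hcm (1+t) (i+1) (by omega) (by omega) h2).symm
  have hbr' : ∀ T : M, a i * (a (i+1) * (a i * T)) = a (i+1) * (a i * (a (i+1) * T)) := by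
    intro T
    rw [← mul_assoc, ← mul_assoc, Hbr i h1 h2, mul_assoc, mul_assoc]
  rw [hsplit]
  simp only [mul_assoc]
  rw [← c1.eq, hbr', ← mul_assoc, ← c2.eq, mul_assoc]

include Hbr Hcm in
theorem lemA_pow {k : ℕ} (hk : k + 1 ≤ m) :
    chainP a 1 m ^ k * a 1 = a (1 + k) * chainP a 1 m ^ k := by
  induction k with
  | zero => simp
  | succ k ih =>
    have h' : k + 1 ≤ m := by omega
    calc chainP a 1 m ^ (k+1) * a 1
        = chainP a 1 m * (chainP a 1 m ^ k * a 1) := by rw [pow_succ']; group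
      _ = chainP a 1 m * (a (1+k) * chainP a 1 m ^ k) := by rw [ih h']
      _ = (chainP a 1 m * a (1+k)) * chainP a 1 m ^ k := by group
      _ = (a (1+k+1) * chainP a 1 m) * chainP a 1 m ^ k := by
          rw [lemA a m Hbr Hcm (by omega) (by omega)]
      _ = a (1 + (k+1)) * chainP a 1 m ^ (k+1) := by rw [pow_succ']; group
include Hbr Hcm in
theorem pushP {k : ℕ} (hk : k + 1 ≤ m) :
    (chainP a 1 m * a 1) ^ k = chainP a 2 k * chainP a 1 m ^ k := by
  induction k with
  | zero => simp
  | succ k ih =>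
    calc (chainP a 1 m * a 1) ^ (k+1)
        = (chainP a 1 m * a 1) ^ k * (chainP a 1 m * a 1) := by rw [pow_succ]
      _ = chainP a 2 k * (chainP a 1 m ^ (k+1) * a 1) := by
          rw [ih (by omega), pow_succ]; group
      _ = chainP a 2 k * (a (1+(k+1)) * chainP a 1 m ^ (k+1)) := by
          rw [lemA_pow a m Hbr Hcm hk]
      _ = (chainP a 2 k * a (2+k)) * chainP a 1 m ^ (k+1) := by
          rw [show 1+(k+1) = 2+k by omega]; group
      _ = chainP a 2 (k+1) * chainP a 1 m ^ (k+1) := by rw [← chainP_succ]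

include Hsq Hbr Hcm in
theorem palP {k : ℕ} (h1 : 1 ≤ k) (h2 : k ≤ m) :
    chainP a 1 k * (chainP a 1 (k-1))⁻¹ = (chainP a 1 k)⁻¹ * chainP a 2 (k-1) := by
  induction k with
  | zero => omega
  | succ k ih =>
    by_cases hk0 : k = 0
    · subst hk0
      have h : (a 1)⁻¹ = a 1 := a_inv a m Hsq le_rfl (by omega)
      simp [chainP, h]
    · have hk1 : 1 ≤ k := by omega
      have hkm : k + 1 ≤ m := h2
      have ihh := ih hk1 (by omega)
      have hak : (a k)⁻¹ = a k := a_inv a m Hsq hk1 (by omega)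
      have hak1 : (a (k+1))⁻¹ = a (k+1) := a_inv a m Hsq (by omega) hkm
      have c2 : Commute (a (k+1)) (chainP a 1 (k-1)) := by
        apply commute_chainP
        intro t ht
        exact (Hcm (1+t) (k+1) (by omega) (by omega) hkm).symm
      have e2 : chainP a 1 k = chainP a 1 (k-1) * a k := by
        conv_lhs => rw [show k = (k-1)+1 by omega]
        rw [chainP_succ, show 1+(k-1) = k by omega]
      have e1 : chainP a 1 (k+1) = chainP a 1 (k-1) * a k * a (k+1) := by
        rw [chainP_succ, e2, show 1+k = k+1 by omega]
      have e3 : chainP a 2 k = chainP a 2 (k-1) * a (k+1) := by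
        conv_lhs => rw [show k = (k-1)+1 by omega]
        rw [chainP_succ, show 2+(k-1) = k+1 by omega]
      have lhs_eq : chainP a 1 (k+1) * (chainP a 1 k)⁻¹ =
          a (k+1) * (chainP a 1 k * (chainP a 1 (k-1))⁻¹) * a (k+1) := by
        rw [e1, e2]
        set X := chainP a 1 (k-1) with hX
        have hb : a k * a (k+1) * a k = a (k+1) * a k * a (k+1) := Hbr k hk1 hkm
        have c2' : Commute (a (k+1)) X⁻¹ := c2.inv_right
        calc X * a k * a (k+1) * (X * a k)⁻¹
            = X * (a k * a (k+1) * a k) * X⁻¹ := by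
              rw [mul_inv_rev, hak]; group
          _ = X * (a (k+1) * a k * a (k+1)) * X⁻¹ := by rw [hb]
          _ = (X * a (k+1)) * (a k * (a (k+1) * X⁻¹)) := by group
          _ = (a (k+1) * X) * (a k * (X⁻¹ * a (k+1))) := by rw [← c2.eq, ← c2'.eq]
          _ = a (k+1) * (X * a k * X⁻¹) * a (k+1) := by group
      have rhs_eq : (chainP a 1 (k+1))⁻¹ * chainP a 2 k =
          a (k+1) * ((chainP a 1 k)⁻¹ * chainP a 2 (k-1)) * a (k+1) := by
        rw [e1, e3, e2]
        rw [mul_inv_rev, mul_inv_rev, hak1]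
        group
      rw [show k + 1 - 1 = k from rfl, lhs_eq, rhs_eq, ihh]

include Hbr Hcm in
theorem conjA_pow {i : ℕ} (hi : i + 1 ≤ m) :
    chainP a 1 m ^ i * a 1 * (chainP a 1 m ^ i)⁻¹ = a (1 + i) := by
  rw [lemA_pow a m Hbr Hcm hi]
  group

include Hsq Hbr Hcm in
theorem mainR2 (hm : 2 ≤ m) :
    chainP a 1 m ^ (m+1) = (chainP a 1 m * a 1) ^ m := by
  have hm1 : 1 ≤ m := by omega
  have key : chainP a 2 (m-1) * chainP a 1 (m-1) = chainP a 1 m ^ 2 := by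
    have hp := palP a m Hsq Hbr Hcm hm1 le_rfl
    have h' : chainP a 1 m * (chainP a 1 m * (chainP a 1 (m-1))⁻¹) = chainP a 2 (m-1) := by
      rw [hp]; group
    calc chainP a 2 (m-1) * chainP a 1 (m-1)
        = chainP a 1 m * (chainP a 1 m * (chainP a 1 (m-1))⁻¹) * chainP a 1 (m-1) := by
          rw [h']
      _ = chainP a 1 m ^ 2 := by rw [pow_two]; group
  have hcam : chainP a 1 m * a m = chainP a 1 (m-1) := by
    conv_lhs => rw [show m = (m-1)+1 by omega]
    rw [chainP_succ, show 1+(m-1) = m by omega, show (m-1)+1 = m by omega,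
      mul_assoc, Hsq m hm1 le_rfl, mul_one]
  symm
  calc (chainP a 1 m * a 1) ^ m
      = (chainP a 1 m * a 1) ^ (m-1) * (chainP a 1 m * a 1) := by
        rw [← pow_succ]; congr 1; omega
    _ = chainP a 2 (m-1) * (chainP a 1 m ^ (m-1) * chainP a 1 m * a 1) := by
        rw [pushP a m Hbr Hcm (by omega)]; group
    _ = chainP a 2 (m-1) * (chainP a 1 m * (chainP a 1 m ^ (m-1) * a 1)) := by
        rw [← pow_succ, pow_succ']; group
    _ = chainP a 2 (m-1) * (chainP a 1 m * (a (1+(m-1)) * chainP a 1 m ^ (m-1))) := by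
        rw [lemA_pow a m Hbr Hcm (by omega)]
    _ = (chainP a 2 (m-1) * (chainP a 1 m * a m)) * chainP a 1 m ^ (m-1) := by
        rw [show 1+(m-1) = m by omega]; group
    _ = (chainP a 2 (m-1) * chainP a 1 (m-1)) * chainP a 1 m ^ (m-1) := by rw [hcam]
    _ = chainP a 1 m ^ 2 * chainP a 1 m ^ (m-1) := by rw [key]
    _ = chainP a 1 m ^ (m+1) := by rw [← pow_add]; congr 1; omega

end CoxSide
section HSide
variable {H : Type*} [Group H]

theorem commute_conj {x y : H} (g : H) (h : Commute x y) :
    Commute (g * x * g⁻¹) (g * y * g⁻¹) := by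
  unfold Commute SemiconjBy at *
  calc g * x * g⁻¹ * (g * y * g⁻¹) = g * (x * y) * g⁻¹ := by group
    _ = g * (y * x) * g⁻¹ := by rw [h]
    _ = g * y * g⁻¹ * (g * x * g⁻¹) := by group

theorem conj_cancel {x y : H} (g : H) (h : g * x * g⁻¹ = g * y * g⁻¹) : x = y := by
  have := mul_right_cancel h
  exact mul_left_cancel this

theorem cube_of_braid {x y : H} (hx : x * x = 1) (hy : y * y = 1)
    (hb : x * y * x = y * x * y) : (x * y) ^ 3 = 1 := by
  have hy' : ∀ z : H, y * (y * z) = z := fun z => by rw [← mul_assoc, hy, one_mul]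
  have hx' : ∀ z : H, x * (x * z) = z := fun z => by rw [← mul_assoc, hx, one_mul]
  have h : (x * y) ^ 3 = (x * y * x) * (y * x * y) := by
    rw [pow_succ, pow_succ, pow_one]; simp [mul_assoc]
  rw [h, hb]
  calc (y * x * y) * (y * x * y) = y * (x * (y * (y * (x * y)))) := by group
    _ = 1 := by rw [hy', hx', hy]

theorem braid_of_cube {x y : H} (hx : x * x = 1) (hy : y * y = 1)
    (hc : (x * y) ^ 3 = 1) : x * y * x = y * x * y := by
  have hx' : x⁻¹ = x := inv_eq_of_mul_eq_one_right hx
  have hy' : y⁻¹ = y := inv_eq_of_mul_eq_one_right hy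
  have hp : (x * y) ^ 3 = x * y * x * (y * (x * y)) := by
    rw [pow_succ, pow_succ, pow_one]; simp [mul_assoc]
  have h1 : x * y * x * (y * (x * y)) = 1 := by rw [← hp, hc]
  have h2 : x * y * x = (y * (x * y))⁻¹ := by
    rw [eq_inv_iff_mul_eq_one]; exact h1
  rw [h2, mul_inv_rev, mul_inv_rev, hx', hy']

/-- `bbF s s1 k = s^k * s1 * s^(-k)`. -/
def bbF (s s1 : H) (k : ℕ) : H := s ^ k * s1 * (s ^ k)⁻¹

variable (s s1 r : H) (n : ℕ)

theorem bbF_sq (h5 : s1 * s1 = 1) (k : ℕ) : bbF s s1 k * bbF s s1 k = 1 := by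
  unfold bbF
  calc s ^ k * s1 * (s ^ k)⁻¹ * (s ^ k * s1 * (s ^ k)⁻¹)
      = s ^ k * (s1 * s1) * (s ^ k)⁻¹ := by group
    _ = 1 := by rw [h5]; group

theorem bbF_add (k t : ℕ) : bbF s s1 (k + t) = s ^ k * bbF s s1 t * (s ^ k)⁻¹ := by
  unfold bbF
  rw [pow_add]
  group

section rels
variable (hn : 4 ≤ n)
variable (h1 : ∀ i, 2 ≤ i → 2 * i ≤ n → Commute s1 (s ^ i * s1 * (s ^ i)⁻¹))
variable (h2 : s ^ n = (s * s1) ^ (n - 1))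

include h2 in
theorem sn_comm_s1 : Commute (s ^ n) s1 := by
  have c1 : Commute (s ^ n) s := (Commute.refl s).pow_left n
  have c2 : Commute (s ^ n) (s * s1) := by
    rw [h2]; exact (Commute.refl (s * s1)).pow_left (n - 1)
  have : s1 = s⁻¹ * (s * s1) := by group
  rw [this]
  exact c1.inv_right.mul_right c2

include h2 in
theorem bbF_n : bbF s s1 n = s1 := by
  unfold bbF
  rw [(sn_comm_s1 s s1 n h2).eq]
  group

include hn h1 h2 in
theorem comm_s1_bb {k : ℕ} (hk2 : 2 ≤ k) (hkn : k ≤ n - 2) :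
    Commute s1 (bbF s s1 k) := by
  by_cases h : 2 * k ≤ n
  · exact h1 k hk2 h
  · have hj2 : 2 ≤ n - k := by omega
    have hjn : 2 * (n - k) ≤ n := by omega
    have hc : Commute s1 (bbF s s1 (n - k)) := h1 (n - k) hj2 hjn
    have hc2 := commute_conj (s ^ k) hc
    have e1 : s ^ k * s1 * (s ^ k)⁻¹ = bbF s s1 k := rfl
    have e2 : s ^ k * bbF s s1 (n - k) * (s ^ k)⁻¹ = s1 := by
      rw [← bbF_add, show k + (n - k) = n by omega, bbF_n s s1 n h2]
    rw [e1, e2] at hc2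
    exact hc2.symm

include hn h1 h2 in
theorem comm_bb_bb {i j : ℕ} (hij : i + 2 ≤ j) (hjn : j ≤ i + (n - 2)) :
    Commute (bbF s s1 i) (bbF s s1 j) := by
  have hc : Commute s1 (bbF s s1 (j - i)) :=
    comm_s1_bb s s1 n hn h1 h2 (by omega) (by omega)
  have hc2 := commute_conj (s ^ i) hc
  have e1 : s ^ i * s1 * (s ^ i)⁻¹ = bbF s s1 i := rfl
  have e2 : s ^ i * bbF s s1 (j - i) * (s ^ i)⁻¹ = bbF s s1 j := by
    rw [← bbF_add, show i + (j - i) = j by omega]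
  rw [e1, e2] at hc2
  exact hc2

theorem ssone_pow (k : ℕ) : (s * s1) ^ k = chainP (bbF s s1) 1 k * s ^ k := by
  induction k with
  | zero => simp
  | succ k ih =>
    rw [pow_succ, ih, chainP_succ]
    have : bbF s s1 (1 + k) = s ^ (k + 1) * s1 * (s ^ (k + 1))⁻¹ := by
      rw [show 1 + k = k + 1 by omega]; rfl
    rw [this, pow_succ]
    group

include hn h2 in
theorem s_eq_chain : s = chainP (bbF s s1) 1 (n - 1) := by
  have h := h2
  rw [ssone_pow s s1 (n - 1)] at h
  have hsn : s ^ n = s * s ^ (n - 1) := by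
    rw [← pow_succ', show n - 1 + 1 = n by omega]
  rw [hsn] at h
  exact mul_right_cancel h

include hn h1 h2 in
theorem braid12 :
    bbF s s1 1 * bbF s s1 2 * bbF s s1 1 = bbF s s1 2 * bbF s s1 1 * bbF s s1 2 := by
  set b1 := bbF s s1 1
  set b2 := bbF s s1 2
  have hsplit : chainP (bbF s s1) 1 (n - 1) = b1 * b2 * chainP (bbF s s1) 3 (n - 3) := by
    rw [show n - 1 = 2 + (n - 3) by omega, chainP_add]
    congr 1
    rw [chainP_succ, chainP_one]
  have cT : Commute b1 (chainP (bbF s s1) 3 (n - 3)) := by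
    apply commute_chainP
    intro t ht
    exact comm_bb_bb s s1 n hn h1 h2 (i := 1) (j := 3 + t) (by omega) (by omega)
  have hb2 : b2 = s * b1 * s⁻¹ := by
    have := bbF_add s s1 1 1
    simpa using this
  have key : b2 = b1 * b2 * b1 * b2⁻¹ * b1⁻¹ := by
    calc b2 = s * b1 * s⁻¹ := hb2
      _ = (b1 * b2 * chainP (bbF s s1) 3 (n - 3)) * b1 *
          (b1 * b2 * chainP (bbF s s1) 3 (n - 3))⁻¹ := by
          rw [← hsplit, ← s_eq_chain s s1 n hn h2]
      _ = b1 * b2 * (chainP (bbF s s1) 3 (n - 3) * b1 *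
            (chainP (bbF s s1) 3 (n - 3))⁻¹) * b2⁻¹ * b1⁻¹ := by group
      _ = b1 * b2 * b1 * b2⁻¹ * b1⁻¹ := by rw [← cT.eq]; group
  calc b1 * b2 * b1 = (b1 * b2 * b1 * b2⁻¹ * b1⁻¹) * b1 * b2 := by group
    _ = b2 * b1 * b2 := by rw [← key]

include hn h1 h2 in
theorem braid_all (k : ℕ) :
    bbF s s1 k * bbF s s1 (k + 1) * bbF s s1 k =
      bbF s s1 (k + 1) * bbF s s1 k * bbF s s1 (k + 1) := by
  have h12 := braid12 s s1 n hn h1 h2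
  -- first deduce braid for 0,1 by deconjugating by s
  have h01 : bbF s s1 0 * bbF s s1 1 * bbF s s1 0 =
      bbF s s1 1 * bbF s s1 0 * bbF s s1 1 := by
    apply conj_cancel (s ^ 1)
    have e : ∀ t : ℕ, s ^ 1 * bbF s s1 t * (s ^ 1)⁻¹ = bbF s s1 (1 + t) := by
      intro t; rw [← bbF_add]
    calc s ^ 1 * (bbF s s1 0 * bbF s s1 1 * bbF s s1 0) * (s ^ 1)⁻¹
        = (s ^ 1 * bbF s s1 0 * (s ^ 1)⁻¹) * (s ^ 1 * bbF s s1 1 * (s ^ 1)⁻¹) *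
          (s ^ 1 * bbF s s1 0 * (s ^ 1)⁻¹) := by group
      _ = bbF s s1 1 * bbF s s1 2 * bbF s s1 1 := by rw [e 0, e 1]
      _ = bbF s s1 2 * bbF s s1 1 * bbF s s1 2 := h12
      _ = (s ^ 1 * bbF s s1 1 * (s ^ 1)⁻¹) * (s ^ 1 * bbF s s1 0 * (s ^ 1)⁻¹) *
          (s ^ 1 * bbF s s1 1 * (s ^ 1)⁻¹) := by rw [e 0, e 1]
      _ = s ^ 1 * (bbF s s1 1 * bbF s s1 0 * bbF s s1 1) * (s ^ 1)⁻¹ := by group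
  have e : ∀ t : ℕ, s ^ k * bbF s s1 t * (s ^ k)⁻¹ = bbF s s1 (k + t) := by
    intro t; rw [← bbF_add]
  have e0 : s ^ k * bbF s s1 0 * (s ^ k)⁻¹ = bbF s s1 k := by simpa using e 0
  calc bbF s s1 k * bbF s s1 (k + 1) * bbF s s1 k
      = (s ^ k * bbF s s1 0 * (s ^ k)⁻¹) * (s ^ k * bbF s s1 1 * (s ^ k)⁻¹) *
        (s ^ k * bbF s s1 0 * (s ^ k)⁻¹) := by rw [e0, e 1]
    _ = s ^ k * (bbF s s1 0 * bbF s s1 1 * bbF s s1 0) * (s ^ k)⁻¹ := by group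
    _ = s ^ k * (bbF s s1 1 * bbF s s1 0 * bbF s s1 1) * (s ^ k)⁻¹ := by rw [h01]
    _ = (s ^ k * bbF s s1 1 * (s ^ k)⁻¹) * (s ^ k * bbF s s1 0 * (s ^ k)⁻¹) *
        (s ^ k * bbF s s1 1 * (s ^ k)⁻¹) := by group
    _ = bbF s s1 (k + 1) * bbF s s1 k * bbF s s1 (k + 1) := by rw [e0, e 1]

end rels
end HSide
section Main

theorem rel_one {α : Type*} {rels : Set (FreeGroup α)} {x : FreeGroup α} (h : x ∈ rels) :
    PresentedGroup.mk rels x = 1 :=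
  (QuotientGroup.eq_one_iff x).2 (Subgroup.subset_normalClosure h)

@[simp] theorem mk_of {α : Type*} {rels : Set (FreeGroup α)} (x : α) :
    PresentedGroup.mk rels (FreeGroup.of x) = PresentedGroup.of x := rfl

open CoxDGen ThreeGenD

variable (n : ℕ)

/-- Generators of `Dₙ` reindexed: `AA n i = wᵢ` for `1 ≤ i ≤ n-1`. -/
noncomputable def AA : ℕ → PresentedGroup (coxeterDRels n) := fun i =>
  if h : i - 1 < n - 1 then PresentedGroup.of (w ⟨i - 1, h⟩) else 1

noncomputable def UU : PresentedGroup (coxeterDRels n) := PresentedGroup.of u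

theorem AA_eq {i : ℕ} (h : i - 1 < n - 1) :
    AA n i = PresentedGroup.of (w ⟨i - 1, h⟩) := by
  unfold AA; rw [dif_pos h]

theorem GA_sq : ∀ i, 1 ≤ i → i ≤ n - 1 → AA n i * AA n i = 1 := by
  intro i hi1 hi2
  have h : i - 1 < n - 1 := by omega
  have hr := rel_one (rels := coxeterDRels n) (Or.inl ⟨⟨i - 1, h⟩, rfl⟩)
  rw [_root_.map_pow, mk_of, pow_two] at hr
  rw [AA_eq n h]
  exact hr

theorem GU_sq : UU n * UU n = 1 := by
  have hr := rel_one (rels := coxeterDRels n) (Or.inr (Or.inl rfl))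
  rw [_root_.map_pow, mk_of, pow_two] at hr
  exact hr

theorem GA_br : ∀ i, 1 ≤ i → i + 1 ≤ n - 1 →
    AA n i * AA n (i+1) * AA n i = AA n (i+1) * AA n i * AA n (i+1) := by
  intro i hi1 hi2
  have h : i - 1 < n - 1 := by omega
  have h' : i + 1 - 1 < n - 1 := by omega
  have hr := rel_one (rels := coxeterDRels n)
    (Or.inr (Or.inr (Or.inl ⟨⟨i - 1, h⟩, ⟨i + 1 - 1, h'⟩, by show i+1-1 = i-1+1; omega, rfl⟩)))
  rw [_root_.map_pow, _root_.map_mul, mk_of, mk_of] at hr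
  rw [AA_eq n h, AA_eq n h']
  have hsq1 : PresentedGroup.of (rels := coxeterDRels n) (w ⟨i - 1, h⟩) *
      PresentedGroup.of (w ⟨i - 1, h⟩) = 1 := by
    rw [← AA_eq n h]; exact GA_sq n i hi1 (by omega)
  have hsq2 : PresentedGroup.of (rels := coxeterDRels n) (w ⟨i + 1 - 1, h'⟩) *
      PresentedGroup.of (w ⟨i + 1 - 1, h'⟩) = 1 := by
    rw [← AA_eq n h']; exact GA_sq n (i+1) (by omega) hi2
  exact braid_of_cube hsq1 hsq2 hr

theorem GA_cm : ∀ i j, 1 ≤ i → i + 2 ≤ j → j ≤ n - 1 →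
    Commute (AA n i) (AA n j) := by
  intro i j hi1 hij hj
  have h : i - 1 < n - 1 := by omega
  have h' : j - 1 < n - 1 := by omega
  have hr := rel_one (rels := coxeterDRels n)
    (Or.inr (Or.inr (Or.inr (Or.inr (Or.inr
      ⟨⟨i - 1, h⟩, ⟨j - 1, h'⟩, Or.inl (by show i-1+1 < j-1; omega), rfl⟩)))))
  rw [_root_.map_mul, _root_.map_mul, _root_.map_inv, _root_.map_mul, mk_of, mk_of] at hr
  rw [mul_inv_eq_one] at hr
  rw [AA_eq n h, AA_eq n h']
  exact hr

theorem GU_cm : ∀ i, 1 ≤ i → i ≤ n - 1 → i ≠ 2 → Commute (UU n) (AA n i) := by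
  intro i hi1 hi2 hi3
  have h : i - 1 < n - 1 := by omega
  have hr := rel_one (rels := coxeterDRels n)
    (Or.inr (Or.inr (Or.inr (Or.inr (Or.inl
      ⟨⟨i - 1, h⟩, by show i - 1 ≠ 1; omega, rfl⟩)))))
  rw [_root_.map_mul, _root_.map_mul, _root_.map_inv, _root_.map_mul, mk_of, mk_of] at hr
  rw [mul_inv_eq_one] at hr
  rw [AA_eq n h]
  exact hr

theorem GU_br (hn : 4 ≤ n) : UU n * AA n 2 * UU n = AA n 2 * UU n * AA n 2 := by
  have h : 2 - 1 < n - 1 := by omega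
  have hr := rel_one (rels := coxeterDRels n)
    (Or.inr (Or.inr (Or.inr (Or.inl ⟨h, rfl⟩))))
  rw [_root_.map_pow, _root_.map_mul, mk_of, mk_of] at hr
  rw [AA_eq n h]
  have hsq : PresentedGroup.of (rels := coxeterDRels n) (w ⟨2 - 1, h⟩) *
      PresentedGroup.of (w ⟨2 - 1, h⟩) = 1 := by
    rw [← AA_eq n h]; exact GA_sq n 2 (by omega) (by omega)
  exact braid_of_cube (GU_sq n) hsq hr

noncomputable def CC : PresentedGroup (coxeterDRels n) := chainP (AA n) 1 (n - 1)

noncomputable def toCox : ThreeGenD → PresentedGroup (coxeterDRels n)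
  | .s1 => AA n 1
  | .s => CC n
  | .r => UU n

theorem phi_rels (hn : 4 ≤ n) :
    ∀ x ∈ threeGenCoxDRels n, FreeGroup.lift (toCox n) x = 1 := by
  intro x hx
  have Hsq := GA_sq n
  have Hbr := GA_br n
  have Hcm := GA_cm n
  rcases hx with ⟨i, hi2, hin, rfl⟩ | rfl | ⟨i, hi, rfl⟩ | rfl | rfl | rfl
  · -- R1
    simp only [_root_.map_mul, _root_.map_pow, _root_.map_inv, FreeGroup.lift_apply_of]
    show (toCox n .s1 * toCox n .s ^ i * toCox n .s1 * (toCox n .s ^ i)⁻¹) *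
        (toCox n .s ^ i * toCox n .s1 * (toCox n .s ^ i)⁻¹ * toCox n .s1)⁻¹ = 1
    rw [mul_inv_eq_one]
    show (AA n 1 * CC n ^ i * AA n 1 * (CC n ^ i)⁻¹) =
      (CC n ^ i * AA n 1 * (CC n ^ i)⁻¹ * AA n 1)
    have hA : CC n ^ i * AA n 1 * (CC n ^ i)⁻¹ = AA n (1 + i) :=
      conjA_pow (AA n) (n-1) Hbr Hcm (by omega)
    have hc : Commute (AA n 1) (AA n (1 + i)) := Hcm 1 (1+i) le_rfl (by omega) (by omega)
    calc AA n 1 * CC n ^ i * AA n 1 * (CC n ^ i)⁻¹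
        = AA n 1 * (CC n ^ i * AA n 1 * (CC n ^ i)⁻¹) := by group
      _ = AA n 1 * AA n (1 + i) := by rw [hA]
      _ = AA n (1 + i) * AA n 1 := hc.eq
      _ = CC n ^ i * AA n 1 * (CC n ^ i)⁻¹ * AA n 1 := by rw [hA]
  · -- R2
    simp only [_root_.map_mul, _root_.map_pow, _root_.map_inv, FreeGroup.lift_apply_of]
    show CC n ^ n * ((CC n * AA n 1) ^ (n-1))⁻¹ = 1
    rw [mul_inv_eq_one]
    have h := mainR2 (AA n) (n-1) Hsq Hbr Hcm (by omega)
    rwa [show n - 1 + 1 = n by omega] at h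
  · -- R3
    simp only [_root_.map_mul, _root_.map_pow, _root_.map_inv, FreeGroup.lift_apply_of]
    show (UU n * CC n ^ i * AA n 1 * (CC n ^ i)⁻¹) *
        (CC n ^ i * AA n 1 * (CC n ^ i)⁻¹ * UU n)⁻¹ = 1
    rw [mul_inv_eq_one]
    have hA : CC n ^ i * AA n 1 * (CC n ^ i)⁻¹ = AA n (1 + i) :=
      conjA_pow (AA n) (n-1) Hbr Hcm (by omega)
    have hc : Commute (UU n) (AA n (1 + i)) :=
      GU_cm n (1+i) (by omega) (by omega) (by omega)
    calc UU n * CC n ^ i * AA n 1 * (CC n ^ i)⁻¹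
        = UU n * (CC n ^ i * AA n 1 * (CC n ^ i)⁻¹) := by group
      _ = UU n * AA n (1 + i) := by rw [hA]
      _ = AA n (1 + i) * UU n := hc.eq
      _ = CC n ^ i * AA n 1 * (CC n ^ i)⁻¹ * UU n := by rw [hA]
  · -- R4
    simp only [_root_.map_mul, _root_.map_pow, _root_.map_inv, FreeGroup.lift_apply_of]
    show (UU n * (CC n * AA n 1 * (CC n)⁻¹) * UU n) *
        ((CC n * AA n 1 * (CC n)⁻¹) * UU n * (CC n * AA n 1 * (CC n)⁻¹))⁻¹ = 1
    rw [mul_inv_eq_one]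
    have hA2 : CC n * AA n 1 * (CC n)⁻¹ = AA n 2 := by
      have h := lemA (AA n) (n-1) Hbr Hcm (i := 1) le_rfl (by omega)
      show chainP (AA n) 1 (n-1) * AA n 1 * (chainP (AA n) 1 (n-1))⁻¹ = AA n 2
      rw [h, mul_inv_cancel_right]
    rw [hA2]
    exact GU_br n hn
  · -- s1^2
    simp only [_root_.map_pow, FreeGroup.lift_apply_of]
    show AA n 1 ^ 2 = 1
    rw [pow_two]; exact GA_sq n 1 le_rfl (by omega)
  · -- r^2
    simp only [_root_.map_pow, FreeGroup.lift_apply_of]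
    show UU n ^ 2 = 1
    rw [pow_two]; exact GU_sq n

noncomputable def SS : PresentedGroup (threeGenCoxDRels n) := PresentedGroup.of s
noncomputable def S1' : PresentedGroup (threeGenCoxDRels n) := PresentedGroup.of ThreeGenD.s1
noncomputable def RR : PresentedGroup (threeGenCoxDRels n) := PresentedGroup.of ThreeGenD.r

theorem h1' : ∀ i, 2 ≤ i → 2 * i ≤ n →
    Commute (S1' n) (SS n ^ i * S1' n * (SS n ^ i)⁻¹) := by
  intro i hi2 hin
  have hr := rel_one (rels := threeGenCoxDRels n) (Or.inl ⟨i, hi2, hin, rfl⟩)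
  rw [_root_.map_mul, _root_.map_inv, _root_.map_mul, _root_.map_mul, _root_.map_mul,
    _root_.map_inv, _root_.map_mul, _root_.map_pow, mk_of, mk_of, mul_inv_eq_one] at hr
  show S1' n * (SS n ^ i * S1' n * (SS n ^ i)⁻¹) = (SS n ^ i * S1' n * (SS n ^ i)⁻¹) * S1' n
  simp only [← mul_assoc]
  exact hr

theorem h2' : SS n ^ n = (SS n * S1' n) ^ (n - 1) := by
  have hr := rel_one (rels := threeGenCoxDRels n) (Or.inr (Or.inl rfl))
  rw [_root_.map_mul, _root_.map_inv, _root_.map_pow, _root_.map_pow, _root_.map_mul,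
    mk_of, mk_of, mul_inv_eq_one] at hr
  exact hr

theorem h3' : ∀ i, (i = 0 ∨ (2 ≤ i ∧ i ≤ n - 2)) →
    Commute (RR n) (SS n ^ i * S1' n * (SS n ^ i)⁻¹) := by
  intro i hi
  have hr := rel_one (rels := threeGenCoxDRels n) (Or.inr (Or.inr (Or.inl ⟨i, hi, rfl⟩)))
  rw [_root_.map_mul, _root_.map_inv, _root_.map_mul, _root_.map_mul, _root_.map_mul,
    _root_.map_inv, _root_.map_mul, _root_.map_pow, mk_of, mk_of, mul_inv_eq_one] at hr
  show RR n * (SS n ^ i * S1' n * (SS n ^ i)⁻¹) = (SS n ^ i * S1' n * (SS n ^ i)⁻¹) * RR n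
  simp only [← mul_assoc]
  exact hr

theorem h4' : RR n * (SS n * S1' n * (SS n)⁻¹) * RR n =
    (SS n * S1' n * (SS n)⁻¹) * RR n * (SS n * S1' n * (SS n)⁻¹) := by
  have hr := rel_one (rels := threeGenCoxDRels n)
    (Or.inr (Or.inr (Or.inr (Or.inl rfl))))
  rw [_root_.map_mul, _root_.map_inv, _root_.map_mul, _root_.map_mul, _root_.map_mul,
    _root_.map_mul, _root_.map_mul, _root_.map_inv, mk_of, mk_of, mk_of, mul_inv_eq_one] at hr
  exact hr

theorem h5' : S1' n * S1' n = 1 := by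
  have hr := rel_one (rels := threeGenCoxDRels n)
    (Or.inr (Or.inr (Or.inr (Or.inr (Or.inl rfl)))))
  rw [_root_.map_pow, mk_of, pow_two] at hr
  exact hr

theorem h6' : RR n * RR n = 1 := by
  have hr := rel_one (rels := threeGenCoxDRels n)
    (Or.inr (Or.inr (Or.inr (Or.inr (Or.inr rfl)))))
  rw [_root_.map_pow, mk_of, pow_two] at hr
  exact hr

noncomputable def toH : CoxDGen n → PresentedGroup (threeGenCoxDRels n)
  | .w i => bbF (SS n) (S1' n) i.val
  | .u => RR n

theorem psi_rels (hn : 4 ≤ n) :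
    ∀ x ∈ coxeterDRels n, FreeGroup.lift (toH n) x = 1 := by
  intro x hx
  have hc1 : ∀ i, 2 ≤ i → 2 * i ≤ n → Commute (S1' n) (SS n ^ i * S1' n * (SS n ^ i)⁻¹) := h1' n
  have hc2 := h2' n
  rcases hx with ⟨i, rfl⟩ | rfl | ⟨i, j, hij, rfl⟩ | ⟨h, rfl⟩ | ⟨i, hi, rfl⟩ | ⟨i, j, hor, rfl⟩
  · simp only [_root_.map_pow, FreeGroup.lift_apply_of]
    show bbF (SS n) (S1' n) i.val ^ 2 = 1
    rw [pow_two]; exact bbF_sq (SS n) (S1' n) (h5' n) i.val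
  · simp only [_root_.map_pow, FreeGroup.lift_apply_of]
    show RR n ^ 2 = 1
    rw [pow_two]; exact h6' n
  · simp only [_root_.map_pow, _root_.map_mul, FreeGroup.lift_apply_of]
    show (bbF (SS n) (S1' n) i.val * bbF (SS n) (S1' n) j.val) ^ 3 = 1
    rw [hij]
    exact cube_of_braid (bbF_sq _ _ (h5' n) _) (bbF_sq _ _ (h5' n) _)
      (braid_all (SS n) (S1' n) n hn hc1 hc2 i.val)
  · simp only [_root_.map_pow, _root_.map_mul, FreeGroup.lift_apply_of]
    show (RR n * bbF (SS n) (S1' n) 1) ^ 3 = 1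
    have e : bbF (SS n) (S1' n) 1 = SS n * S1' n * (SS n)⁻¹ := by
      show SS n ^ 1 * S1' n * (SS n ^ 1)⁻¹ = _
      rw [pow_one]
    exact cube_of_braid (h6' n) (bbF_sq _ _ (h5' n) _) (by rw [e]; exact h4' n)
  · simp only [_root_.map_mul, _root_.map_inv, FreeGroup.lift_apply_of]
    show RR n * bbF (SS n) (S1' n) i.val *
        (bbF (SS n) (S1' n) i.val * RR n)⁻¹ = 1
    rw [mul_inv_eq_one]
    have := h3' n i.val (by rcases i with ⟨v, hv⟩; simp at hi ⊢; omega)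
    exact this.eq
  · simp only [_root_.map_mul, _root_.map_inv, FreeGroup.lift_apply_of]
    show bbF (SS n) (S1' n) i.val * bbF (SS n) (S1' n) j.val *
        (bbF (SS n) (S1' n) j.val * bbF (SS n) (S1' n) i.val)⁻¹ = 1
    rw [mul_inv_eq_one]
    have hiv : i.val ≤ n - 2 := by omega
    have hjv : j.val ≤ n - 2 := by omega
    rcases hor with hor | hor
    · exact (comm_bb_bb (SS n) (S1' n) n hn hc1 hc2 (by omega) (by omega)).eq
    · exact (comm_bb_bb (SS n) (S1' n) n hn hc1 hc2 (by omega) (by omega)).symm.eq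

noncomputable def phiH (hn : 4 ≤ n) :
    PresentedGroup (threeGenCoxDRels n) →* PresentedGroup (coxeterDRels n) :=
  PresentedGroup.toGroup (phi_rels n hn)

noncomputable def psiH (hn : 4 ≤ n) :
    PresentedGroup (coxeterDRels n) →* PresentedGroup (threeGenCoxDRels n) :=
  PresentedGroup.toGroup (psi_rels n hn)

theorem phiH_SS (hn : 4 ≤ n) : phiH n hn (SS n) = CC n := by
  rw [phiH, SS, PresentedGroup.toGroup.of]; rfl

theorem phiH_S1 (hn : 4 ≤ n) : phiH n hn (S1' n) = AA n 1 := by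
  rw [phiH, S1', PresentedGroup.toGroup.of]; rfl

theorem comp1 (hn : 4 ≤ n) :
    (phiH n hn).comp (psiH n hn) = MonoidHom.id (PresentedGroup (coxeterDRels n)) := by
  apply PresentedGroup.ext
  intro x
  rw [MonoidHom.comp_apply, MonoidHom.id_apply]
  cases x with
  | u =>
    rw [psiH, PresentedGroup.toGroup.of]
    show phiH n hn (RR n) = _
    rw [phiH, RR, PresentedGroup.toGroup.of]
    rfl
  | w i =>
    have hlt := i.isLt
    rw [psiH, PresentedGroup.toGroup.of]
    show phiH n hn (bbF (SS n) (S1' n) i.val) = _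
    have hmap : phiH n hn (bbF (SS n) (S1' n) i.val) =
        CC n ^ i.val * AA n 1 * (CC n ^ i.val)⁻¹ := by
      rw [bbF, _root_.map_mul, _root_.map_mul, _root_.map_inv, _root_.map_pow,
        phiH_SS n hn, phiH_S1 n hn]
    rw [hmap]
    have hA : CC n ^ i.val * AA n 1 * (CC n ^ i.val)⁻¹ = AA n (1 + i.val) :=
      conjA_pow (AA n) (n-1) (GA_br n) (GA_cm n) (by omega)
    rw [hA]
    have h : 1 + i.val - 1 < n - 1 := by omega
    rw [AA_eq n h]
    have he : (⟨1 + i.val - 1, h⟩ : Fin (n-1)) = i := Fin.ext (show 1 + i.val - 1 = i.val by omega)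
    rw [he]

theorem comp2 (hn : 4 ≤ n) :
    (psiH n hn).comp (phiH n hn) = MonoidHom.id (PresentedGroup (threeGenCoxDRels n)) := by
  apply PresentedGroup.ext
  intro x
  rw [MonoidHom.comp_apply, MonoidHom.id_apply]
  cases x with
  | r =>
    rw [phiH, PresentedGroup.toGroup.of]
    show psiH n hn (UU n) = _
    rw [psiH, UU, PresentedGroup.toGroup.of]
    rfl
  | s1 =>
    rw [phiH, PresentedGroup.toGroup.of]
    show psiH n hn (AA n 1) = _
    have h : (1:ℕ) - 1 < n - 1 := by omega
    rw [AA_eq n h, psiH, PresentedGroup.toGroup.of]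
    show bbF (SS n) (S1' n) 0 = _
    rw [bbF, pow_zero]
    show 1 * S1' n * 1⁻¹ = PresentedGroup.of ThreeGenD.s1
    rw [inv_one, one_mul, mul_one]
    rfl
  | s =>
    rw [phiH, PresentedGroup.toGroup.of]
    show psiH n hn (CC n) = _
    rw [CC, map_chainP]
    have step1 : chainP (fun t => psiH n hn (AA n t)) 1 (n-1) =
        chainP (bbF (SS n) (S1' n)) 0 (n-1) := by
      apply chainP_congr
      intro t ht
      have h : 1 + t - 1 < n - 1 := by omega
      rw [AA_eq n h, psiH, PresentedGroup.toGroup.of]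
      show bbF (SS n) (S1' n) (1 + t - 1) = bbF (SS n) (S1' n) (0 + t)
      congr 1
      omega
    rw [step1]
    have step2 : chainP (bbF (SS n) (S1' n)) 0 (n-1) =
        (SS n)⁻¹ * chainP (bbF (SS n) (S1' n)) 1 (n-1) * (SS n)⁻¹⁻¹ := by
      rw [← chainP_conj]
      apply chainP_congr
      intro t ht
      show bbF (SS n) (S1' n) (0 + t) =
        (SS n)⁻¹ * bbF (SS n) (S1' n) (1 + t) * (SS n)⁻¹⁻¹
      rw [bbF_add (SS n) (S1' n) 1 t, pow_one, inv_inv]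
      group
    rw [step2, ← s_eq_chain (SS n) (S1' n) n hn (h2' n), inv_inv]
    show (SS n)⁻¹ * SS n * SS n = PresentedGroup.of ThreeGenD.s
    rw [inv_mul_cancel, one_mul]
    rfl

end Main

theorem coxeterD_three_generator_presentation (n : ℕ) (hn : 4 ≤ n) :
    Nonempty (PresentedGroup (threeGenCoxDRels n) ≃* CoxeterGroupD n) :=
  ⟨MonoidHom.toMulEquiv (phiH n hn) (psiH n hn) (comp2 n hn) (comp1 n hn)⟩
end

section
/- For every n ≥ 3, the sphere braid group Brₙ(S²) is isomorphic to the group defined by the presentation with two generators δ₁, δ and relations: δ₁δⁱδ₁δ⁻ⁱ = δⁱδ₁δ⁻ⁱδ₁ for 2 ≤ i ≤ n/2; δⁿ = (δδ₁)ⁿ⁻¹; and δⁿ(δ₁δ⁻¹)ⁿ⁻¹ = 1; an isomorphism is given by δ₁ ↦ δ₁ and δ ↦ δ₁δ₂⋯δₙ₋₁. -/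
/-!
STATEMENT 6: For every n ≥ 3, the sphere braid group Brₙ(S²) is isomorphic to
the group presented by two generators δ₁, δ with relations
δ₁δⁱδ₁δ⁻ⁱ = δⁱδ₁δ⁻ⁱδ₁ (2 ≤ i ≤ n/2), δⁿ = (δδ₁)ⁿ⁻¹ and δⁿ(δ₁δ⁻¹)ⁿ⁻¹ = 1,
via δ₁ ↦ δ₁, δ ↦ δ₁δ₂⋯δₙ₋₁.
-/

open FreeGroup

/-- The relations of the Zariski presentation of the sphere braid group
`Brₙ(S²)`, on generators `δ₁, …, δ_{n-1}` (encoded as `Fin (n-1)`, `i`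
standing for `δ_{i+1}`): the braid relations together with the sphere
relation `δ₁δ₂⋯δₙ₋₂δₙ₋₁²δₙ₋₂⋯δ₂δ₁ = 1`. -/
def sphereBraidRels (n : ℕ) : Set (FreeGroup (Fin (n - 1))) :=
  {r | (∃ i j : Fin (n - 1), (i.val + 1 < j.val ∨ j.val + 1 < i.val) ∧
          r = of i * of j * (of j * of i)⁻¹) ∨
       (∃ i j : Fin (n - 1), j.val = i.val + 1 ∧
          r = of i * of j * of i * (of j * of i * of j)⁻¹) ∨
       r = (List.ofFn (fun i : Fin (n - 1) => of i)).prod *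
           (List.ofFn (fun i : Fin (n - 1) => of i)).reverse.prod}

/-- The sphere braid group `Brₙ(S²)`. -/
def SphereBraidGroup (n : ℕ) : Type := PresentedGroup (sphereBraidRels n)

noncomputable instance (n : ℕ) : Group (SphereBraidGroup n) :=
  inferInstanceAs (Group (PresentedGroup (sphereBraidRels n)))

/-- The two generators δ₁ and δ. -/
inductive SphereTwoGen : Type
  | d1 : SphereTwoGen
  | d : SphereTwoGen

open SphereTwoGen in
/-- The relations of the two-generator presentation of the sphere braid
group. -/
def sphereTwoGenRels (n : ℕ) : Set (FreeGroup SphereTwoGen) :=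
  {r | (∃ i : ℕ, 2 ≤ i ∧ 2 * i ≤ n ∧
          r = (of d1 * (of d) ^ i * of d1 * ((of d) ^ i)⁻¹) *
              ((of d) ^ i * of d1 * ((of d) ^ i)⁻¹ * of d1)⁻¹) ∨
       r = (of d) ^ n * (((of d) * of d1) ^ (n - 1))⁻¹ ∨
       r = (of d) ^ n * (of d1 * (of d)⁻¹) ^ (n - 1)}



private lemma key_cancel {M : Type*} [Group M] (A B X Y : M) :
    A * (X * B) = A * (Y * B) ↔ X = Y := by
  rw [mul_left_cancel_iff, mul_right_cancel_iff]

private lemma conj_mul_conj {M : Type*} [Group M] {x y : M} (c : M) (h : x * y = y * x) :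
    (c * x * c⁻¹) * (c * y * c⁻¹) = (c * y * c⁻¹) * (c * x * c⁻¹) := by
  calc (c * x * c⁻¹) * (c * y * c⁻¹) = c * (x * y) * c⁻¹ := by group
    _ = c * (y * x) * c⁻¹ := by rw [h]
    _ = (c * y * c⁻¹) * (c * x * c⁻¹) := by group

private lemma telescope {M : Type*} [Group M] (a t : M) : ∀ k : ℕ,
    (a * t) ^ k = ((List.range k).map (fun i => t ^ i * a * (t ^ i)⁻¹)).prod * t ^ k
  | 0 => by simp
  | k + 1 => by
    rw [pow_succ, telescope a t k, List.range_succ, List.map_append, List.prod_append,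
      List.map_singleton, List.prod_singleton, pow_succ]
    group

private lemma my_conj_pow {M : Type*} [Group M] (s : ℕ → M) (t : M) (m : ℕ)
    (hstep : ∀ j, j + 1 < m → t * s j * t⁻¹ = s (j + 1)) :
    ∀ i, i < m → t ^ i * s 0 * (t ^ i)⁻¹ = s i := by
  intro i
  induction i with
  | zero => intro _; simp
  | succ i ih =>
    intro hi
    rw [← hstep i hi, ← ih (by omega)]
    group

private lemma ofFn_eq_range_map {M : Type*} (m : ℕ) (f : ℕ → M) :
    List.ofFn (fun i : Fin m => f i.val) = (List.range m).map f := by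
  apply List.ext_getElem <;> simp

private lemma reverse_prod_eq {M : Type*} [Group M] (L : List M) :
    L.reverse.prod = ((L.map (fun x => x⁻¹)).prod)⁻¹ := by
  induction L with
  | nil => simp
  | cons x L ih => simp [ih, mul_inv_rev]

private lemma prod_braid_iff {M : Type*} [Group M] (s : ℕ → M) (m j : ℕ)
    (hcomm : ∀ p q, p + 2 ≤ q → q < m → s p * s q = s q * s p) (hj : j + 2 ≤ m) :
    ((List.range m).map s).prod * s j = s (j + 1) * ((List.range m).map s).prod ↔
      s j * s (j + 1) * s j = s (j + 1) * s j * s (j + 1) := by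
  obtain ⟨k, rfl⟩ : ∃ k, m = j + 2 + k := ⟨m - (j + 2), by omega⟩
  have hP : ((List.range (j + 2 + k)).map s).prod =
      ((List.range j).map s).prod * ((s j * s (j + 1)) *
        ((List.range k).map (fun x => s (j + 2 + x))).prod) := by
    rw [List.range_add, show j + 2 = (j + 1) + 1 from rfl, List.range_succ, List.range_succ]
    simp [List.map_map, Function.comp_def, mul_assoc]
  rw [hP]
  set A := ((List.range j).map s).prod with hA
  set B := ((List.range k).map (fun x => s (j + 2 + x))).prod with hB
  have hBj : B * s j = s j * B := by
    refine (Commute.list_prod_right _ (s j) ?_).eq.symm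
    intro x hx
    obtain ⟨i, hi, rfl⟩ := List.mem_map.mp hx
    exact hcomm j (j + 2 + i) (by omega) (by simp at hi; omega)
  have hAj : s (j + 1) * A = A * s (j + 1) := by
    refine (Commute.list_prod_right _ (s (j + 1)) ?_).eq
    intro x hx
    obtain ⟨i, hi, rfl⟩ := List.mem_map.mp hx
    exact (hcomm i (j + 1) (by simp at hi; omega) (by omega)).symm
  have e1 : A * ((s j * s (j + 1)) * B) * s j = A * ((s j * s (j + 1) * s j) * B) := by
    calc A * ((s j * s (j + 1)) * B) * s j = A * ((s j * s (j + 1)) * (B * s j)) := by group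
      _ = A * ((s j * s (j + 1)) * (s j * B)) := by rw [hBj]
      _ = A * ((s j * s (j + 1) * s j) * B) := by group
  have e2 : s (j + 1) * (A * ((s j * s (j + 1)) * B)) =
      A * ((s (j + 1) * s j * s (j + 1)) * B) := by
    calc s (j + 1) * (A * ((s j * s (j + 1)) * B))
        = (s (j + 1) * A) * ((s j * s (j + 1)) * B) := by group
      _ = (A * s (j + 1)) * ((s j * s (j + 1)) * B) := by rw [hAj]
      _ = A * ((s (j + 1) * s j * s (j + 1)) * B) := by group
  rw [e1, e2, key_cancel]


section Gside
variable (n : ℕ)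

private noncomputable def gG (i : Fin (n-1)) : PresentedGroup (sphereBraidRels n) :=
  PresentedGroup.of i

private noncomputable def DG : PresentedGroup (sphereBraidRels n) :=
  (List.ofFn (fun i => gG n i)).prod

private noncomputable def ggG (i : ℕ) : PresentedGroup (sphereBraidRels n) :=
  if h : i < n - 1 then gG n ⟨i, h⟩ else 1

private lemma relG {r} (hr : r ∈ sphereBraidRels n) :
    PresentedGroup.mk (sphereBraidRels n) r = 1 :=
  (QuotientGroup.eq_one_iff r).mpr (Subgroup.subset_normalClosure hr)

private lemma gg_lt {i : ℕ} (h : i < n - 1) : ggG n i = gG n ⟨i, h⟩ := dif_pos h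

private lemma gcomm (i j : Fin (n-1)) (h : i.val + 1 < j.val) :
    gG n i * gG n j = gG n j * gG n i := by
  have := relG n (Or.inl ⟨i, j, Or.inl h, rfl⟩)
  simp only [_root_.map_mul, _root_.map_inv] at this
  rw [mul_inv_eq_one] at this
  exact this

private lemma gbraid (i j : Fin (n-1)) (h : j.val = i.val + 1) :
    gG n i * gG n j * gG n i = gG n j * gG n i * gG n j := by
  have := relG n (Or.inr (Or.inl ⟨i, j, h, rfl⟩))
  simp only [_root_.map_mul, _root_.map_inv] at this
  rw [mul_inv_eq_one] at this
  exact this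

private lemma gsphere : DG n * (List.ofFn (fun i => gG n i)).reverse.prod = 1 := by
  have := relG n (Or.inr (Or.inr rfl))
  simp only [_root_.map_mul, map_list_prod, List.map_reverse, List.map_ofFn] at this
  exact this

private lemma ofFn_gG : List.ofFn (fun i => gG n i) = (List.range (n-1)).map (ggG n) := by
  apply List.ext_getElem
  · simp
  · intro i h1 h2
    simp only [List.getElem_ofFn, List.getElem_map, List.getElem_range]
    rw [gg_lt n (by simpa using h1)]

private lemma DG_range : DG n = ((List.range (n-1)).map (ggG n)).prod := by
  rw [DG, ofFn_gG]

private lemma Gcomm' (i j : ℕ) (h1 : i + 2 ≤ j) (h2 : j < n - 1) :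
    ggG n i * ggG n j = ggG n j * ggG n i := by
  rw [gg_lt n (by omega), gg_lt n h2]
  exact gcomm n _ _ (by show i + 1 < j; omega)

private lemma Gbraid' (j : ℕ) (h : j + 1 < n - 1) :
    ggG n j * ggG n (j+1) * ggG n j = ggG n (j+1) * ggG n j * ggG n (j+1) := by
  rw [gg_lt n (by omega), gg_lt n h]
  exact gbraid n _ _ rfl

private lemma Gstep (j : ℕ) (h : j + 1 < n - 1) :
    DG n * ggG n j * (DG n)⁻¹ = ggG n (j+1) := by
  have key : ((List.range (n-1)).map (ggG n)).prod * ggG n j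
      = ggG n (j+1) * ((List.range (n-1)).map (ggG n)).prod :=
    (prod_braid_iff (ggG n) (n-1) j (fun p q hp hq => Gcomm' n p q hp hq) (by omega)).mpr
      (Gbraid' n j h)
  rw [DG_range]
  calc ((List.range (n-1)).map (ggG n)).prod * ggG n j * (((List.range (n-1)).map (ggG n)).prod)⁻¹
      = ggG n (j+1) * ((List.range (n-1)).map (ggG n)).prod *
        (((List.range (n-1)).map (ggG n)).prod)⁻¹ := by rw [key]
    _ = ggG n (j+1) := by group

private lemma GconjPow (i : ℕ) (h : i < n - 1) :
    (DG n) ^ i * ggG n 0 * ((DG n) ^ i)⁻¹ = ggG n i :=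
  my_conj_pow (ggG n) (DG n) (n-1) (fun j hj => Gstep n j hj) i h

private lemma GR2 (hn : 3 ≤ n) : (DG n * ggG n 0) ^ (n-1) = (DG n) ^ n := by
  have t1 : (ggG n 0 * DG n) ^ (n-1) = (DG n) ^ n := by
    rw [telescope]
    have hm : (List.range (n-1)).map (fun i => (DG n)^i * ggG n 0 * ((DG n)^i)⁻¹)
        = (List.range (n-1)).map (ggG n) :=
      List.map_congr_left (fun i hi => GconjPow n i (List.mem_range.mp hi))
    rw [hm, ← DG_range, ← pow_succ', show n - 1 + 1 = n by omega]
  have sc : SemiconjBy (DG n) (ggG n 0 * DG n) (DG n * ggG n 0) := (mul_assoc _ _ _).symm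
  have sp := (sc.pow_right (n-1)).eq
  calc (DG n * ggG n 0) ^ (n-1)
      = (DG n * ggG n 0) ^ (n-1) * DG n * (DG n)⁻¹ := by group
    _ = DG n * (ggG n 0 * DG n) ^ (n-1) * (DG n)⁻¹ := by rw [← sp]
    _ = DG n * (DG n) ^ n * (DG n)⁻¹ := by rw [t1]
    _ = (DG n) ^ n := by group

private lemma Grev : (List.ofFn (fun i => gG n i)).reverse.prod = (DG n)⁻¹ :=
  eq_inv_of_mul_eq_one_right ((mul_eq_one_iff_inv_eq.mp (gsphere n)) ▸ (gsphere n))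

private lemma GprodInv :
    ((List.range (n-1)).map (fun i => (ggG n i)⁻¹)).prod = DG n := by
  have h1 := reverse_prod_eq ((List.range (n-1)).map (ggG n))
  rw [List.map_map] at h1
  have h2 : ((List.range (n-1)).map (ggG n)).reverse.prod = (DG n)⁻¹ := by
    rw [← ofFn_gG, Grev]
  rw [h2] at h1
  have h3 : (List.range (n-1)).map ((fun x => x⁻¹) ∘ ggG n)
      = (List.range (n-1)).map (fun i => (ggG n i)⁻¹) := rfl
  rw [h3] at h1
  exact inv_injective h1.symm

private lemma GR3 (hn : 3 ≤ n) : (DG n) ^ n * (ggG n 0 * (DG n)⁻¹) ^ (n-1) = 1 := by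
  have t1 : ((ggG n 0)⁻¹ * DG n) ^ (n-1) = (DG n) ^ n := by
    rw [telescope]
    have hm : (List.range (n-1)).map (fun i => (DG n)^i * (ggG n 0)⁻¹ * ((DG n)^i)⁻¹)
        = (List.range (n-1)).map (fun i => (ggG n i)⁻¹) :=
      List.map_congr_left (fun i hi => by
        rw [← GconjPow n i (List.mem_range.mp hi)]; group)
    rw [hm, GprodInv, ← pow_succ', show n - 1 + 1 = n by omega]
  have sc : SemiconjBy (DG n) ((ggG n 0)⁻¹ * DG n) (DG n * (ggG n 0)⁻¹) :=
    (mul_assoc _ _ _).symm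
  have sp := (sc.pow_right (n-1)).eq
  have t2 : (DG n * (ggG n 0)⁻¹) ^ (n-1) = (DG n) ^ n := by
    calc (DG n * (ggG n 0)⁻¹) ^ (n-1)
        = (DG n * (ggG n 0)⁻¹) ^ (n-1) * DG n * (DG n)⁻¹ := by group
      _ = DG n * ((ggG n 0)⁻¹ * DG n) ^ (n-1) * (DG n)⁻¹ := by rw [← sp]
      _ = DG n * (DG n) ^ n * (DG n)⁻¹ := by rw [t1]
      _ = (DG n) ^ n := by group
  have t3 : (ggG n 0 * (DG n)⁻¹) ^ (n-1) = ((DG n) ^ n)⁻¹ := by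
    rw [show ggG n 0 * (DG n)⁻¹ = (DG n * (ggG n 0)⁻¹)⁻¹ by group, inv_pow, t2]
  rw [t3, mul_inv_cancel]

end Gside

section Hside
variable (n : ℕ)

private noncomputable def aH : PresentedGroup (sphereTwoGenRels n) :=
  PresentedGroup.of SphereTwoGen.d1

private noncomputable def tH : PresentedGroup (sphereTwoGenRels n) :=
  PresentedGroup.of SphereTwoGen.d

private noncomputable def sH (i : ℕ) : PresentedGroup (sphereTwoGenRels n) :=
  tH n ^ i * aH n * (tH n ^ i)⁻¹

private lemma relH {r} (hr : r ∈ sphereTwoGenRels n) :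
    PresentedGroup.mk (sphereTwoGenRels n) r = 1 :=
  (QuotientGroup.eq_one_iff r).mpr (Subgroup.subset_normalClosure hr)

private lemma hR1 (i : ℕ) (h2 : 2 ≤ i) (hi : 2 * i ≤ n) :
    aH n * sH n i = sH n i * aH n := by
  have := relH n (Or.inl ⟨i, h2, hi, rfl⟩)
  simp only [_root_.map_mul, _root_.map_inv, _root_.map_pow] at this
  rw [mul_inv_eq_one] at this
  simp only [sH, aH, tH, mul_assoc] at this ⊢
  exact this

private lemma hR2 : (tH n * aH n) ^ (n-1) = tH n ^ n := by
  have := relH n (Or.inr (Or.inl rfl))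
  simp only [_root_.map_mul, _root_.map_inv, _root_.map_pow] at this
  rw [mul_inv_eq_one] at this
  exact this.symm

private lemma hR3 : (tH n * (aH n)⁻¹) ^ (n-1) = tH n ^ n := by
  have := relH n (Or.inr (Or.inr rfl))
  simp only [_root_.map_mul, _root_.map_inv, _root_.map_pow] at this
  have h : ((aH n * (tH n)⁻¹) ^ (n-1)) = (tH n ^ n)⁻¹ := eq_inv_of_mul_eq_one_right this
  calc (tH n * (aH n)⁻¹) ^ (n-1) = ((aH n * (tH n)⁻¹)⁻¹) ^ (n-1) := by
        rw [mul_inv_rev, inv_inv]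
    _ = (((aH n * (tH n)⁻¹)) ^ (n-1))⁻¹ := by rw [inv_pow]
    _ = tH n ^ n := by rw [h, inv_inv]

private lemma hcent : Commute (aH n) (tH n ^ n) := by
  have c1 : Commute (tH n * aH n) (tH n ^ n) := by
    rw [← hR2]; exact (Commute.refl _).pow_right _
  have c2 : Commute (tH n) (tH n ^ n) := (Commute.refl _).pow_right _
  have c3 : Commute ((tH n)⁻¹ * (tH n * aH n)) (tH n ^ n) := (c2.inv_left).mul_left c1
  simpa using c3

private lemma hstepH (j : ℕ) : tH n * sH n j * (tH n)⁻¹ = sH n (j+1) := by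
  simp only [sH, pow_succ]
  group

private lemma hconj_n : tH n ^ n * aH n * (tH n ^ n)⁻¹ = aH n := by
  have h := (hcent n).eq
  rw [← h]
  group

private lemma commD (d : ℕ) (h2 : 2 ≤ d) (hd : d ≤ n - 2) (hn : 3 ≤ n) :
    aH n * sH n d = sH n d * aH n := by
  by_cases hc : 2 * d ≤ n
  · exact hR1 n d h2 hc
  · have h1 := hR1 n (n - d) (by omega) (by omega)
    have h3 : tH n ^ d * sH n (n - d) * (tH n ^ d)⁻¹ = aH n := by
      have e : tH n ^ d * sH n (n - d) * (tH n ^ d)⁻¹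
          = tH n ^ (d + (n - d)) * aH n * (tH n ^ (d + (n - d)))⁻¹ := by
        simp only [sH, pow_add]; group
      rw [e, show d + (n - d) = n by omega, hconj_n]
    have h4 := conj_mul_conj (tH n ^ d) h1
    rw [h3] at h4
    simp only [sH] at h4 ⊢
    exact h4.symm

private lemma commAll (i j : ℕ) (hij : i + 2 ≤ j) (hj : j ≤ n - 2 + i) (hn : 3 ≤ n) :
    sH n i * sH n j = sH n j * sH n i := by
  have h1 := commD n (j - i) (by omega) (by omega) hn
  have h4 := conj_mul_conj (tH n ^ i) h1
  have h3 : tH n ^ i * sH n (j - i) * (tH n ^ i)⁻¹ = sH n j := by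
    have e : tH n ^ i * sH n (j - i) * (tH n ^ i)⁻¹
        = tH n ^ (i + (j - i)) * aH n * (tH n ^ (i + (j - i)))⁻¹ := by
      simp only [sH, pow_add]; group
    rw [e, show i + (j - i) = j by omega]
    rfl
  rw [h3] at h4
  simp only [sH] at h4 ⊢
  exact h4

private lemma prodP (hn : 3 ≤ n) : ((List.range (n-1)).map (sH n)).prod = tH n := by
  have sc : SemiconjBy (aH n) (tH n * aH n) (aH n * tH n) := (mul_assoc _ _ _).symm
  have sp := (sc.pow_right (n-1)).eq
  have t1 : (aH n * tH n) ^ (n-1) = tH n ^ n := by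
    calc (aH n * tH n) ^ (n-1)
        = (aH n * tH n) ^ (n-1) * aH n * (aH n)⁻¹ := by group
      _ = aH n * (tH n * aH n) ^ (n-1) * (aH n)⁻¹ := by rw [← sp]
      _ = aH n * tH n ^ n * (aH n)⁻¹ := by rw [hR2]
      _ = tH n ^ n * aH n * (aH n)⁻¹ := by rw [(hcent n).eq]
      _ = tH n ^ n := by group
  have tel := telescope (aH n) (tH n) (n-1)
  have hmap : (List.range (n-1)).map (fun i => tH n ^ i * aH n * (tH n ^ i)⁻¹)
      = (List.range (n-1)).map (sH n) := rfl
  rw [hmap, t1] at tel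
  have hpow : tH n ^ n = tH n * tH n ^ (n-1) := by
    rw [← pow_succ', show n - 1 + 1 = n by omega]
  rw [hpow] at tel
  calc ((List.range (n-1)).map (sH n)).prod
      = ((List.range (n-1)).map (sH n)).prod * tH n ^ (n-1) * (tH n ^ (n-1))⁻¹ := by group
    _ = tH n * tH n ^ (n-1) * (tH n ^ (n-1))⁻¹ := by rw [← tel]
    _ = tH n := by group

private lemma prodQ (hn : 3 ≤ n) :
    ((List.range (n-1)).map (fun i => (sH n i)⁻¹)).prod = tH n := by
  have sc : SemiconjBy ((aH n)⁻¹) (tH n * (aH n)⁻¹) ((aH n)⁻¹ * tH n) := (mul_assoc _ _ _).symm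
  have sp := (sc.pow_right (n-1)).eq
  have t1 : ((aH n)⁻¹ * tH n) ^ (n-1) = tH n ^ n := by
    calc ((aH n)⁻¹ * tH n) ^ (n-1)
        = ((aH n)⁻¹ * tH n) ^ (n-1) * (aH n)⁻¹ * aH n := by group
      _ = (aH n)⁻¹ * (tH n * (aH n)⁻¹) ^ (n-1) * aH n := by rw [← sp]
      _ = (aH n)⁻¹ * tH n ^ n * aH n := by rw [hR3]
      _ = tH n ^ n := by rw [((hcent n).inv_left).eq]; group
  have tel := telescope ((aH n)⁻¹) (tH n) (n-1)
  have hmap : (List.range (n-1)).map (fun i => tH n ^ i * (aH n)⁻¹ * (tH n ^ i)⁻¹)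
      = (List.range (n-1)).map (fun i => (sH n i)⁻¹) :=
    List.map_congr_left (fun i _ => by simp only [sH]; group)
  rw [hmap, t1] at tel
  have hpow : tH n ^ n = tH n * tH n ^ (n-1) := by
    rw [← pow_succ', show n - 1 + 1 = n by omega]
  rw [hpow] at tel
  calc ((List.range (n-1)).map (fun i => (sH n i)⁻¹)).prod
      = ((List.range (n-1)).map (fun i => (sH n i)⁻¹)).prod * tH n ^ (n-1) *
        (tH n ^ (n-1))⁻¹ := by group
    _ = tH n * tH n ^ (n-1) * (tH n ^ (n-1))⁻¹ := by rw [← tel]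
    _ = tH n := by group

end Hside

section Maps
variable (n : ℕ)

private noncomputable def fphi : SphereTwoGen → PresentedGroup (sphereBraidRels n)
  | SphereTwoGen.d1 => ggG n 0
  | SphereTwoGen.d => DG n

private noncomputable def fpsi (i : Fin (n-1)) : PresentedGroup (sphereTwoGenRels n) :=
  sH n i.val

private lemma hphi (hn : 3 ≤ n) :
    ∀ r ∈ sphereTwoGenRels n, FreeGroup.lift (fphi n) r = 1 := by
  rintro r (⟨i, h2, hi, rfl⟩ | rfl | rfl)
  · simp only [_root_.map_mul, _root_.map_inv, _root_.map_pow, FreeGroup.lift_apply_of, fphi]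
    rw [mul_inv_eq_one]
    have hi1 : i < n - 1 := by omega
    have h11 := GconjPow n i hi1
    calc ggG n 0 * DG n ^ i * ggG n 0 * (DG n ^ i)⁻¹
        = ggG n 0 * (DG n ^ i * ggG n 0 * (DG n ^ i)⁻¹) := by group
      _ = ggG n 0 * ggG n i := by rw [h11]
      _ = ggG n i * ggG n 0 := Gcomm' n 0 i (by omega) hi1
      _ = (DG n ^ i * ggG n 0 * (DG n ^ i)⁻¹) * ggG n 0 := by rw [h11]
      _ = DG n ^ i * ggG n 0 * (DG n ^ i)⁻¹ * ggG n 0 := by group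
  · simp only [_root_.map_mul, _root_.map_inv, _root_.map_pow, FreeGroup.lift_apply_of, fphi]
    rw [mul_inv_eq_one, GR2 n hn]
  · simp only [_root_.map_mul, _root_.map_inv, _root_.map_pow, FreeGroup.lift_apply_of, fphi]
    exact GR3 n hn

private lemma hpsi (hn : 3 ≤ n) :
    ∀ r ∈ sphereBraidRels n, FreeGroup.lift (fpsi n) r = 1 := by
  rintro r (⟨i, j, hij, rfl⟩ | ⟨i, j, hij, rfl⟩ | rfl)
  · simp only [_root_.map_mul, _root_.map_inv, FreeGroup.lift_apply_of, fpsi]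
    rw [mul_inv_eq_one]
    rcases hij with h | h
    · exact commAll n i.val j.val (by omega) (by have := j.isLt; omega) hn
    · exact (commAll n j.val i.val (by omega) (by have := i.isLt; omega) hn).symm
  · simp only [_root_.map_mul, _root_.map_inv, FreeGroup.lift_apply_of, fpsi]
    rw [mul_inv_eq_one]
    have hjlt : j.val < n - 1 := j.isLt
    have key := (prod_braid_iff (sH n) (n-1) i.val
      (fun p q hp hq => commAll n p q hp (by omega) hn) (by omega)).mp
    have hP : ((List.range (n-1)).map (sH n)).prod * sH n i.val
        = sH n (i.val+1) * ((List.range (n-1)).map (sH n)).prod := by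
      rw [prodP n hn]
      calc tH n * sH n i.val = (tH n * sH n i.val * (tH n)⁻¹) * tH n := by group
        _ = sH n (i.val+1) * tH n := by rw [hstepH]
    have hb := key hP
    rw [hij]
    exact hb
  · simp only [_root_.map_mul, map_list_prod, List.map_reverse, List.map_ofFn]
    have hF : List.ofFn (⇑(FreeGroup.lift (fpsi n)) ∘ FreeGroup.of)
        = (List.range (n-1)).map (sH n) := by
      rw [show ⇑(FreeGroup.lift (fpsi n)) ∘ FreeGroup.of
          = fun i : Fin (n-1) => sH n i.val from funext fun i => FreeGroup.lift_apply_of]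
      exact ofFn_eq_range_map (n-1) (sH n)
    rw [hF, prodP n hn, reverse_prod_eq, List.map_map]
    have hmm : (List.range (n-1)).map ((fun x => x⁻¹) ∘ sH n)
        = (List.range (n-1)).map (fun i => (sH n i)⁻¹) := rfl
    rw [hmm, prodQ n hn, mul_inv_cancel]

private noncomputable def Phi (hn : 3 ≤ n) :
    PresentedGroup (sphereTwoGenRels n) →* PresentedGroup (sphereBraidRels n) :=
  PresentedGroup.toGroup (hphi n hn)

private noncomputable def Psi (hn : 3 ≤ n) :
    PresentedGroup (sphereBraidRels n) →* PresentedGroup (sphereTwoGenRels n) :=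
  PresentedGroup.toGroup (hpsi n hn)

private lemma comp1_s6 (hn : 3 ≤ n) :
    (Psi n hn).comp (Phi n hn) = MonoidHom.id _ := by
  apply PresentedGroup.ext
  intro x
  cases x with
  | d1 =>
    simp only [MonoidHom.comp_apply, MonoidHom.id_apply, Phi, Psi,
      PresentedGroup.toGroup.of, fphi]
    rw [gg_lt n (by omega)]
    simp only [gG, PresentedGroup.toGroup.of]
    simp [fpsi, sH, aH]
  | d =>
    simp only [MonoidHom.comp_apply, MonoidHom.id_apply, Phi, Psi,
      PresentedGroup.toGroup.of, fphi]
    rw [DG, map_list_prod, List.map_ofFn]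
    have hF : List.ofFn (⇑(PresentedGroup.toGroup (hpsi n hn)) ∘ gG n)
        = (List.range (n-1)).map (sH n) := by
      rw [show ⇑(PresentedGroup.toGroup (hpsi n hn)) ∘ gG n
          = fun i : Fin (n-1) => sH n i.val from funext fun i => PresentedGroup.toGroup.of _]
      exact ofFn_eq_range_map (n-1) (sH n)
    rw [hF, prodP n hn]
    rfl

private lemma comp2_s6 (hn : 3 ≤ n) :
    (Phi n hn).comp (Psi n hn) = MonoidHom.id _ := by
  apply PresentedGroup.ext
  intro i
  simp only [MonoidHom.comp_apply, MonoidHom.id_apply, Psi, PresentedGroup.toGroup.of]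
  have h1 : fpsi n i = sH n i.val := rfl
  rw [h1]
  simp only [sH, _root_.map_mul, _root_.map_inv, _root_.map_pow]
  have ha : Phi n hn (aH n) = ggG n 0 := PresentedGroup.toGroup.of _
  have ht : Phi n hn (tH n) = DG n := PresentedGroup.toGroup.of _
  rw [ha, ht, GconjPow n i.val i.isLt, gg_lt n i.isLt]
  rfl

end Maps

theorem sphere_braid_group_two_generator_presentation (n : ℕ) (hn : 3 ≤ n) :
    ∃ e : PresentedGroup (sphereTwoGenRels n) ≃* SphereBraidGroup n,
      e (PresentedGroup.of SphereTwoGen.d1) =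
        PresentedGroup.of (rels := sphereBraidRels n) ⟨0, by omega⟩ ∧
      e (PresentedGroup.of SphereTwoGen.d) =
        (List.ofFn (fun i : Fin (n - 1) =>
          PresentedGroup.of (rels := sphereBraidRels n) i)).prod := by
  refine ⟨MonoidHom.toMulEquiv (Phi n hn) (Psi n hn) (comp1_s6 n hn) (comp2_s6 n hn), ?_, ?_⟩
  · show Phi n hn (PresentedGroup.of SphereTwoGen.d1) = _
    rw [show Phi n hn (PresentedGroup.of SphereTwoGen.d1) = ggG n 0
      from PresentedGroup.toGroup.of _, gg_lt n (by omega)]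
    rfl
  · show Phi n hn (PresentedGroup.of SphereTwoGen.d) = _
    rw [show Phi n hn (PresentedGroup.of SphereTwoGen.d) = DG n
      from PresentedGroup.toGroup.of _]
    rfl
end
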